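/- Let N be a positive integer with 4 | N, let a and c be coprime integers, set t := N/gcd(c², N) and d := 1 − act. Then d is odd, and gcd(c²t, d) = 1. Define ε := (c²t/|d|) if d ≡ 1 (mod 4) and ε := −i·(c²t/|d|) if d ≡ 3 (mod 4), where (·/·) is the Jacobi symbol (with the convention (m/1) = 1). Write 2‖c for '2 divides c but 4 does not', 4‖N for '4 divides N but 8 does not', and 8‖N for '8 divides N but 16 does not'. Then: ε = −i^t if 2‖c and 4‖N; ε = −1 if 2‖c and 8‖N; and ε = 1 in all other cases. -/

import Mathlib

private lemma pow2_dvd_of_odd_mul {g x : ℤ} (hg : ¬ (2:ℤ) ∣ g) {n : ℕ}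
    (h : (2:ℤ)^n ∣ g * x) : (2:ℤ)^n ∣ x := by
  have hco : IsCoprime ((2:ℤ)^n) g :=
    ((Int.prime_two.coprime_iff_not_dvd).mpr hg).pow_left
  exact hco.dvd_of_dvd_mul_left h

private lemma jacobi_mod_one {x : ℤ} {b : ℕ} (h : (b:ℤ) ∣ x - 1) :
    jacobiSym x b = 1 := by
  have h1 : (1:ℤ) ≡ x [ZMOD (b:ℤ)] := Int.modEq_iff_dvd.mpr h
  have h2 : x % (b:ℤ) = 1 % (b:ℤ) := h1.symm
  rw [jacobiSym.mod_left' h2, jacobiSym.one_left]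

private lemma jacobi_aux_one {u d : ℤ} (hu : 0 < u) (huo : ¬ (2:ℤ) ∣ u)
    (hdvd : u ∣ d - 1) (hd : d % 4 = 1) : jacobiSym u d.natAbs = 1 := by
  have hun : ((u.natAbs : ℤ)) = u := Int.natAbs_of_nonneg hu.le
  have huodd : Odd u.natAbs := by rw [Nat.odd_iff]; omega
  have hdvd' : ((u.natAbs : ℤ)) ∣ d - 1 := by rwa [hun]
  have hnodd : d.natAbs % 2 = 1 := by omega
  rcases le_or_gt 0 d with hd0 | hd0
  · have habs : ((d.natAbs : ℤ)) = d := Int.natAbs_of_nonneg hd0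
    have hn4 : d.natAbs % 4 = 1 := by omega
    have h1 : jacobiSym ((u.natAbs : ℤ)) d.natAbs = jacobiSym ((d.natAbs : ℤ)) u.natAbs :=
      jacobiSym.quadratic_reciprocity_one_mod_four' huodd hn4
    rw [← hun, h1]
    exact jacobi_mod_one (by rw [habs]; rwa [hun])
  · have habs : ((d.natAbs : ℤ)) = -d := by omega
    have hd1u : jacobiSym d u.natAbs = 1 := jacobi_mod_one (by rwa [hun])
    have hneg : jacobiSym ((d.natAbs : ℤ)) u.natAbs = ZMod.χ₄ u.natAbs * jacobiSym d u.natAbs := by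
      rw [habs]; exact jacobiSym.neg d huodd
    have hn4 : d.natAbs % 4 = 3 := by omega
    rcases (by omega : u % 4 = 1 ∨ u % 4 = 3) with h4 | h4
    · have hu4 : u.natAbs % 4 = 1 := by omega
      have h1 : jacobiSym ((u.natAbs : ℤ)) d.natAbs = jacobiSym ((d.natAbs : ℤ)) u.natAbs :=
        jacobiSym.quadratic_reciprocity_one_mod_four hu4 (by rw [Nat.odd_iff]; exact hnodd)
      rw [← hun, h1, hneg, hd1u, ZMod.χ₄_nat_one_mod_four hu4, mul_one]
    · have hu4 : u.natAbs % 4 = 3 := by omega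
      have h1 : jacobiSym ((u.natAbs : ℤ)) d.natAbs = -jacobiSym ((d.natAbs : ℤ)) u.natAbs :=
        jacobiSym.quadratic_reciprocity_three_mod_four hu4 hn4
      rw [← hun, h1, hneg, hd1u, ZMod.χ₄_nat_three_mod_four hu4]; norm_num

private lemma jacobi_aux_three {u d : ℤ} (hu : 0 < u) (huo : ¬ (2:ℤ) ∣ u)
    (hdvd : u ∣ d - 1) (hd : d % 4 = 3) :
    jacobiSym u d.natAbs = (if u % 4 = 1 then 1 else -1) := by
  have hun : ((u.natAbs : ℤ)) = u := Int.natAbs_of_nonneg hu.le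
  have huodd : Odd u.natAbs := by rw [Nat.odd_iff]; omega
  have hnodd : d.natAbs % 2 = 1 := by omega
  have hd1u : jacobiSym d u.natAbs = 1 := jacobi_mod_one (by rwa [hun])
  rcases le_or_gt 0 d with hd0 | hd0
  · have habs : ((d.natAbs : ℤ)) = d := Int.natAbs_of_nonneg hd0
    have hn4 : d.natAbs % 4 = 3 := by omega
    rcases (by omega : u % 4 = 1 ∨ u % 4 = 3) with h4 | h4
    · have hu4 : u.natAbs % 4 = 1 := by omega
      have h1 : jacobiSym ((u.natAbs : ℤ)) d.natAbs = jacobiSym ((d.natAbs : ℤ)) u.natAbs :=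
        jacobiSym.quadratic_reciprocity_one_mod_four hu4 (by rw [Nat.odd_iff]; exact hnodd)
      rw [if_pos h4, ← hun, h1, habs, hd1u]
    · have hu4 : u.natAbs % 4 = 3 := by omega
      have h1 : jacobiSym ((u.natAbs : ℤ)) d.natAbs = -jacobiSym ((d.natAbs : ℤ)) u.natAbs :=
        jacobiSym.quadratic_reciprocity_three_mod_four hu4 hn4
      rw [if_neg (by omega), ← hun, h1, habs, hd1u]
  · have habs : ((d.natAbs : ℤ)) = -d := by omega
    have hn4 : d.natAbs % 4 = 1 := by omega
    have hneg : jacobiSym ((d.natAbs : ℤ)) u.natAbs = ZMod.χ₄ u.natAbs * jacobiSym d u.natAbs := by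
      rw [habs]; exact jacobiSym.neg d huodd
    have h1 : jacobiSym ((u.natAbs : ℤ)) d.natAbs = jacobiSym ((d.natAbs : ℤ)) u.natAbs :=
      jacobiSym.quadratic_reciprocity_one_mod_four' huodd hn4
    rcases (by omega : u % 4 = 1 ∨ u % 4 = 3) with h4 | h4
    · rw [if_pos h4, ← hun, h1, hneg, hd1u, ZMod.χ₄_nat_one_mod_four (by omega), mul_one]
    · rw [if_neg (by omega), ← hun, h1, hneg, hd1u, ZMod.χ₄_nat_three_mod_four (by omega), mul_one]

private lemma jacobi_two_one {d : ℤ} (h : d % 8 = 1) : jacobiSym 2 d.natAbs = 1 := by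
  have hodd : Odd d.natAbs := by rw [Nat.odd_iff]; omega
  rw [jacobiSym.at_two hodd, ZMod.χ₈_nat_eq_if_mod_eight]
  have : d.natAbs % 8 = 1 ∨ d.natAbs % 8 = 7 := by omega
  rcases this with h' | h' <;> simp [h', Nat.odd_iff.mp hodd]

private lemma jacobi_two_neg_one {d : ℤ} (h : d % 8 = 5) : jacobiSym 2 d.natAbs = -1 := by
  have hodd : Odd d.natAbs := by rw [Nat.odd_iff]; omega
  rw [jacobiSym.at_two hodd, ZMod.χ₈_nat_eq_if_mod_eight]
  have : d.natAbs % 8 = 5 ∨ d.natAbs % 8 = 3 := by omega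
  rcases this with h' | h' <;> simp [h', Nat.odd_iff.mp hodd]

private lemma jacobi_two_decomp {t d : ℤ} (ht : 0 < t) (hdvd : t ∣ d - 1) (hd : d % 4 = 1) :
    jacobiSym t d.natAbs = jacobiSym 2 d.natAbs ^ (t.natAbs.factorization 2) := by
  set e := t.natAbs.factorization 2 with he
  set u := t.natAbs / 2 ^ e with hu
  have hT0 : t.natAbs ≠ 0 := by omega
  have hT : 2 ^ e * u = t.natAbs := Nat.ordProj_mul_ordCompl_eq_self t.natAbs 2
  have huodd : ¬ 2 ∣ u := Nat.not_dvd_ordCompl Nat.prime_two hT0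
  have hu0 : 0 < u := Nat.ordCompl_pos 2 hT0
  have htabs : ((t.natAbs : ℤ)) = t := by omega
  have hut : (u : ℤ) ∣ t := by
    rw [← htabs]
    exact_mod_cast Nat.ordCompl_dvd t.natAbs 2
  have step : jacobiSym t d.natAbs
      = jacobiSym 2 d.natAbs ^ e * jacobiSym (u : ℤ) d.natAbs := by
    rw [← htabs, ← hT]
    push_cast
    rw [jacobiSym.mul_left, jacobiSym.pow_left]
  rw [step, jacobi_aux_one (by exact_mod_cast hu0) (by exact_mod_cast huodd)
    (dvd_trans hut hdvd) hd, mul_one]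

private lemma I_zpow_one_mod_four {t : ℤ} (ht : 0 ≤ t) (h : t % 4 = 1) : Complex.I ^ t = Complex.I := by
  obtain ⟨n, rfl⟩ := Int.eq_ofNat_of_zero_le ht
  rw [zpow_natCast]
  obtain ⟨q, hq⟩ : ∃ q, n = 4*q+1 := ⟨n/4, by omega⟩
  rw [hq, pow_add, pow_mul, Complex.I_pow_four, one_pow, one_mul, pow_one]

private lemma I_zpow_three_mod_four {t : ℤ} (ht : 0 ≤ t) (h : t % 4 = 3) : Complex.I ^ t = -Complex.I := by
  obtain ⟨n, rfl⟩ := Int.eq_ofNat_of_zero_le ht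
  rw [zpow_natCast]
  obtain ⟨q, hq⟩ : ∃ q, n = 4*q+3 := ⟨n/4, by omega⟩
  rw [hq, pow_add, pow_mul, Complex.I_pow_four, one_pow, one_mul]
  rw [pow_succ, Complex.I_sq]
  ring


/-- Let `4 ∣ N`, `a` and `c` coprime, `t = N / gcd(c², N)`,
`d = 1 - a c t`.  Then `d` is odd and `gcd(c² t, d) = 1`.  With
`ε = (c²t/|d|)` if `d ≡ 1 (mod 4)` and `ε = -i (c²t/|d|)` if `d ≡ 3 (mod 4)`
(Jacobi symbols), one has: `ε = -i^t` if `2‖c` and `4‖N`; `ε = -1` if `2‖c` and `8‖N`;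
and `ε = 1` otherwise. -/
theorem jacobi_epsilon_of_conjugated_parabolic (N : ℕ) (hN : 0 < N) (h4 : 4 ∣ N)
    (a c : ℤ) (hac : IsCoprime a c) (t d : ℤ)
    (ht : t = (N : ℤ) / (Int.gcd (c ^ 2) (N : ℤ) : ℤ)) (hd : d = 1 - a * c * t)
    (ε : ℂ)
    (hε : ε = if d % 4 = 1 then ((jacobiSym (c ^ 2 * t) d.natAbs : ℤ) : ℂ)
      else -Complex.I * ((jacobiSym (c ^ 2 * t) d.natAbs : ℤ) : ℂ)) :
    Odd d ∧ Int.gcd (c ^ 2 * t) d = 1 ∧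
    ((2 ∣ c ∧ ¬ (4 ∣ c)) ∧ ((4 ∣ N) ∧ ¬ (8 ∣ N)) → ε = -(Complex.I ^ t)) ∧
    ((2 ∣ c ∧ ¬ (4 ∣ c)) ∧ ((8 ∣ N) ∧ ¬ (16 ∣ N)) → ε = -1) ∧
    (¬ (((2 ∣ c ∧ ¬ (4 ∣ c)) ∧ ((4 ∣ N) ∧ ¬ (8 ∣ N))) ∨
        ((2 ∣ c ∧ ¬ (4 ∣ c)) ∧ ((8 ∣ N) ∧ ¬ (16 ∣ N)))) → ε = 1) := by
  have hNpos : (0:ℤ) < (N:ℤ) := by exact_mod_cast hN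
  have h4N : (4:ℤ) ∣ (N:ℤ) := by exact_mod_cast Int.natCast_dvd_natCast.mpr h4
  have hgN : ((Int.gcd (c ^ 2) (N:ℤ) : ℤ)) ∣ (N:ℤ) := Int.gcd_dvd_right _ _
  have hgc : ((Int.gcd (c ^ 2) (N:ℤ) : ℤ)) ∣ c ^ 2 := Int.gcd_dvd_left _ _
  set g : ℤ := ((Int.gcd (c ^ 2) (N:ℤ) : ℤ)) with hgdef
  have hg0 : 0 < g := by
    have hne : Int.gcd (c ^ 2) (N:ℤ) ≠ 0 := by
      intro h
      exact hNpos.ne' (by exact_mod_cast (Int.gcd_eq_zero_iff.mp h).2)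
    rw [hgdef]
    exact_mod_cast Nat.pos_of_ne_zero hne
  have hgt : g * t = N := by rw [ht]; exact Int.mul_ediv_cancel' hgN
  have ht0 : 0 < t := by nlinarith
  have hdt : c * t ∣ d - 1 := ⟨-a, by rw [hd]; ring⟩
  have htd : t ∣ d - 1 := dvd_trans (dvd_mul_left t c) hdt
  have hcd : c ∣ d - 1 := dvd_trans (dvd_mul_right c t) hdt
  have hcop : IsCoprime (c * t) d := ⟨a, 1, by rw [hd]; ring⟩
  have hc_d : IsCoprime c d := hcop.of_mul_left_left
  have ht_d : IsCoprime t d := hcop.of_mul_left_right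
  have hct2 : IsCoprime (c ^ 2 * t) d := IsCoprime.mul_left (hc_d.pow_left) ht_d
  have hgcd1 : Int.gcd (c ^ 2 * t) d = 1 := Int.isCoprime_iff_gcd_eq_one.mp hct2
  have hF1 : ¬ (2:ℤ) ∣ c → (4:ℤ) ∣ t := by
    intro hc2
    have hgo : ¬ (2:ℤ) ∣ g := fun h2 =>
      hc2 (Int.prime_two.dvd_of_dvd_pow (h2.trans hgc))
    have h22 : (2:ℤ)^2 ∣ g * t := by
      rw [hgt, show ((2:ℤ))^2 = 4 from by norm_num]; exact h4N
    have := pow2_dvd_of_odd_mul hgo h22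
    rwa [show ((2:ℤ))^2 = 4 from by norm_num] at this
  have hkey : (2:ℤ) ∣ c → ¬ (4:ℤ) ∣ c → ∃ g'' : ℤ, g = 4 * g'' ∧ ¬ (2:ℤ) ∣ g'' := by
    intro hc2 hc4
    obtain ⟨c', hc'⟩ := hc2
    have hc'odd : ¬ (2:ℤ) ∣ c' := by
      rintro ⟨k, hk⟩; exact hc4 ⟨k, by omega⟩
    have h4g : (4:ℤ) ∣ g := Int.dvd_coe_gcd ⟨c'^2, by rw [hc']; ring⟩ h4N
    obtain ⟨g'', hg''⟩ := h4g
    refine ⟨g'', hg'', fun h2g'' => hc'odd ?_⟩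
    have hdvdc2 : g'' ∣ c'^2 := by
      have h1 : (4:ℤ) * g'' ∣ 4 * c'^2 := by
        rw [← hg'', show (4:ℤ) * c'^2 = c^2 from by rw [hc']; ring]; exact hgc
      exact (mul_dvd_mul_iff_left (by norm_num : (4:ℤ) ≠ 0)).mp h1
    exact Int.prime_two.dvd_of_dvd_pow (h2g''.trans hdvdc2)
  have haodd : (2:ℤ) ∣ c → ¬ (2:ℤ) ∣ a := by
    intro hc2 h2a
    have := hac.isUnit_of_dvd' h2a hc2
    rw [Int.isUnit_iff] at this
    omega
  have hd2 : (2:ℤ) ∣ d - 1 := by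
    by_cases hc2 : (2:ℤ) ∣ c
    · exact dvd_trans hc2 hcd
    · exact dvd_trans (by norm_num : (2:ℤ) ∣ 4) ((hF1 hc2).trans htd)
  have hdodd : Odd d := by rw [Int.odd_iff]; omega
  have hc_d' : Int.gcd c d = 1 := Int.isCoprime_iff_gcd_eq_one.mp hc_d
  have hcsq : jacobiSym (c^2) d.natAbs = 1 := by
    apply jacobiSym.sq_one'
    rw [Int.gcd_def, Int.natAbs_natCast]
    rw [Int.gcd_def] at hc_d'
    exact hc_d'
  have hsplit : jacobiSym (c^2*t) d.natAbs = jacobiSym t d.natAbs := by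
    rw [jacobiSym.mul_left, hcsq, one_mul]
  refine ⟨hdodd, hgcd1, ?_, ?_, ?_⟩
  · -- Case A : 2 ∥ c, 4 ∥ N
    rintro ⟨⟨hc2, hc4⟩, _, h8N⟩
    have h2t : ¬ (2:ℤ) ∣ t := by
      intro h2t
      obtain ⟨g'', hg'', hg''o⟩ := hkey hc2 hc4
      obtain ⟨t', ht'⟩ := h2t
      apply h8N
      have h8Z : (8:ℤ) ∣ (N:ℤ) := ⟨g'' * t', by rw [← hgt, hg'', ht']; ring⟩
      exact_mod_cast h8Z
    obtain ⟨c', hc'⟩ := hc2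
    have hc'odd : ¬ (2:ℤ) ∣ c' := by
      rintro ⟨k, hk⟩; exact hc4 ⟨k, by omega⟩
    have hao := haodd ⟨c', hc'⟩
    have hodd_m : Odd (a * c' * t) := by
      exact ((Int.odd_iff.mpr (by omega)).mul (Int.odd_iff.mpr (by omega))).mul
        (Int.odd_iff.mpr (by omega))
    obtain ⟨j, hj⟩ := hodd_m
    have hdeq : d = 1 - 2 * (a * c' * t) := by rw [hd, hc']; ring
    have hdm : d % 4 = 3 := by omega
    rw [hε, if_neg (by omega)]
    have hJ : jacobiSym (c^2*t) d.natAbs = if t % 4 = 1 then 1 else -1 := by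
      rw [hsplit]; exact jacobi_aux_three ht0 h2t htd hdm
    rcases (by omega : t % 4 = 1 ∨ t % 4 = 3) with h4t | h4t
    · rw [hJ, if_pos h4t, I_zpow_one_mod_four ht0.le h4t]; push_cast; ring
    · rw [hJ, if_neg (by omega), I_zpow_three_mod_four ht0.le h4t]; push_cast; ring
  · -- Case B : 2 ∥ c, 8 ∥ N
    rintro ⟨⟨hc2, hc4⟩, h8N, h16N⟩
    obtain ⟨g'', hg'', hg''o⟩ := hkey hc2 hc4
    have h8NZ : (8:ℤ) ∣ (N:ℤ) := by exact_mod_cast h8N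
    have h2t : (2:ℤ) ∣ t := by
      have h2 : (2:ℤ) ∣ g'' * t := by
        have h0 : (8:ℤ) ∣ 4 * (g'' * t) := by
          rw [show (4:ℤ) * (g''*t) = g*t from by rw [hg'']; ring, hgt]; exact h8NZ
        obtain ⟨k, hk⟩ := h0
        omega
      have := pow2_dvd_of_odd_mul hg''o (n := 1)
        (by rw [show ((2:ℤ))^1 = 2 from by norm_num]; exact h2)
      rwa [show ((2:ℤ))^1 = 2 from by norm_num] at this
    have h4t : ¬ (4:ℤ) ∣ t := by
      rintro ⟨t', ht'⟩
      apply h16N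
      have h16Z : (16:ℤ) ∣ (N:ℤ) := ⟨g'' * t', by rw [← hgt, hg'', ht']; ring⟩
      exact_mod_cast h16Z
    obtain ⟨c', hc'⟩ := hc2
    have hc'odd : ¬ (2:ℤ) ∣ c' := by
      rintro ⟨k, hk⟩; exact hc4 ⟨k, by omega⟩
    have hao := haodd ⟨c', hc'⟩
    obtain ⟨t'', ht''⟩ := h2t
    have ht''odd : ¬ (2:ℤ) ∣ t'' := by
      rintro ⟨k, hk⟩; exact h4t ⟨k, by omega⟩
    have hodd_m : Odd (a * c' * t'') := by
      exact ((Int.odd_iff.mpr (by omega)).mul (Int.odd_iff.mpr (by omega))).mul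
        (Int.odd_iff.mpr (by omega))
    obtain ⟨j, hj⟩ := hodd_m
    have hdeq : d = 1 - 4 * (a * c' * t'') := by rw [hd, hc', ht'']; ring
    have hd8 : d % 8 = 5 := by omega
    have hT0 : t.natAbs ≠ 0 := by omega
    have he1 : t.natAbs.factorization 2 = 1 := by
      have h2tn : 2 ∣ t.natAbs := by omega
      have h4tn : ¬ (4 ∣ t.natAbs) := by omega
      have h1 : 1 ≤ t.natAbs.factorization 2 :=
        (Nat.Prime.pow_dvd_iff_le_factorization Nat.prime_two hT0).mp (by simpa using h2tn)
      have h2 : ¬ 2 ≤ t.natAbs.factorization 2 := fun h => h4tn (by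
        have := (Nat.Prime.pow_dvd_iff_le_factorization Nat.prime_two hT0).mpr h
        simpa using this)
      omega
    have hd4 : d % 4 = 1 := by omega
    rw [hε, if_pos hd4, hsplit, jacobi_two_decomp ht0 htd hd4, he1, pow_one,
      jacobi_two_neg_one hd8]
    norm_num
  · -- Case C : otherwise
    intro hnot
    obtain ⟨hn1, hn2⟩ := not_or.mp hnot
    have main : d % 4 = 1 ∧
        ((8:ℤ) ∣ d - 1 ∨ ¬ (2:ℤ) ∣ t ∨ ((4:ℤ) ∣ t ∧ ¬ (8:ℤ) ∣ t)) := by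
      by_cases hc2 : (2:ℤ) ∣ c
      · by_cases hc4 : (4:ℤ) ∣ c
        · by_cases h2t : (2:ℤ) ∣ t
          · have h8 : (8:ℤ) ∣ d - 1 := by
              refine dvd_trans ?_ hdt
              obtain ⟨x, hx⟩ := hc4
              obtain ⟨y, hy⟩ := h2t
              exact ⟨x*y, by rw [hx, hy]; ring⟩
            exact ⟨by omega, Or.inl h8⟩
          · have h4d : (4:ℤ) ∣ d - 1 := dvd_trans hc4 hcd
            exact ⟨by omega, Or.inr (Or.inl h2t)⟩
        · have h8N : 8 ∣ N := by
            by_contra h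
            exact hn1 ⟨⟨hc2, hc4⟩, h4, h⟩
          have h16N : 16 ∣ N := by
            by_contra h
            exact hn2 ⟨⟨hc2, hc4⟩, h8N, h⟩
          obtain ⟨g'', hg'', hg''o⟩ := hkey hc2 hc4
          have h16Z : (16:ℤ) ∣ (N:ℤ) := by exact_mod_cast h16N
          have h4gt : (4:ℤ) ∣ g'' * t := by
            have h0 : (16:ℤ) ∣ 4 * (g'' * t) := by
              rw [show (4:ℤ) * (g''*t) = g*t from by rw [hg'']; ring, hgt]; exact h16Z
            obtain ⟨k, hk⟩ := h0
            omega
          have h4t : (4:ℤ) ∣ t := by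
            have := pow2_dvd_of_odd_mul hg''o (n := 2)
              (by rw [show ((2:ℤ))^2 = 4 from by norm_num]; exact h4gt)
            rwa [show ((2:ℤ))^2 = 4 from by norm_num] at this
          obtain ⟨c', hc'⟩ := hc2
          have h8 : (8:ℤ) ∣ d - 1 := by
            refine dvd_trans ?_ hdt
            obtain ⟨y, hy⟩ := h4t
            exact ⟨c'*y, by rw [hc', hy]; ring⟩
          exact ⟨by omega, Or.inl h8⟩
      · have h4t := hF1 hc2
        have h4d : (4:ℤ) ∣ d - 1 := h4t.trans htd
        by_cases h8t : (8:ℤ) ∣ t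
        · exact ⟨by omega, Or.inl (h8t.trans htd)⟩
        · exact ⟨by omega, Or.inr (Or.inr ⟨h4t, h8t⟩)⟩
    obtain ⟨hd4, hcond⟩ := main
    rw [hε, if_pos hd4, hsplit, jacobi_two_decomp ht0 htd hd4]
    rcases hcond with h8 | h2t | ⟨h4t, h8t⟩
    · rw [jacobi_two_one (by omega), one_pow]; norm_num
    · have he0 : t.natAbs.factorization 2 = 0 :=
        Nat.factorization_eq_zero_of_not_dvd (by omega)
      rw [he0, pow_zero]; norm_num
    · have hT0 : t.natAbs ≠ 0 := by omega
      have he2 : t.natAbs.factorization 2 = 2 := by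
        have h4tn : 4 ∣ t.natAbs := by omega
        have h8tn : ¬ (8 ∣ t.natAbs) := by omega
        have h1 : 2 ≤ t.natAbs.factorization 2 :=
          (Nat.Prime.pow_dvd_iff_le_factorization Nat.prime_two hT0).mp (by simpa using h4tn)
        have h2 : ¬ 3 ≤ t.natAbs.factorization 2 := fun h => h8tn (by
          have := (Nat.Prime.pow_dvd_iff_le_factorization Nat.prime_two hT0).mpr h
          simpa using this)
        omega
      have hsq : jacobiSym 2 d.natAbs ^ 2 = 1 := by
        apply jacobiSym.sq_one
        rw [Int.gcd_def, Int.natAbs_natCast]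
        exact (Nat.Prime.coprime_iff_not_dvd Nat.prime_two).mpr (by omega)
      rw [he2, hsq]
      norm_num
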